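/- Let μ¹,…,μ^d be probability measures on ℝ with finite first moments, and suppose for each j there are N_j points x_0^j,…,x_{N_j-1}^j with W₁(μ^j, (1/N_j)Σ_i δ_{x_i^j}) ≤ ε_j. Let N = N_1⋯N_d and let X = ∏_{j=1}^d {x_0^j,…,x_{N_j-1}^j} ⊂ ℝ^d be the product grid. Then W₁(μ¹⊗⋯⊗μ^d, (1/N)Σ_{x∈X} δ_x) ≤ ε_1 + ⋯ + ε_d, where W₁ on ℝ^d is taken with respect to the Euclidean norm. -/

import Mathlib

open MeasureTheory

noncomputable section

/-- The Monge–Kantorovich–Rubinstein (Wasserstein-1) distance, via its dual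
(Lipschitz) formulation. -/
def W1 {E : Type*} [MeasurableSpace E] [PseudoMetricSpace E]
    (μ ν : Measure E) : ℝ :=
  sSup { r | ∃ ξ : E → ℝ, LipschitzWith 1 ξ ∧ r = |∫ z, ξ z ∂μ - ∫ z, ξ z ∂ν| }

namespace W1Aux

lemma integrable_dirac' {f : ℝ → ℝ} (a : ℝ) : Integrable f (Measure.dirac a) :=
  (integrable_const (f a)).congr (ae_eq_dirac f).symm

lemma atom_prob {N : ℕ} (hN : 0 < N) (x : Fin N → ℝ) :
    IsProbabilityMeasure ((N : ENNReal)⁻¹ • ∑ i, Measure.dirac (x i)) := by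
  constructor
  have hN' : (N : ENNReal) ≠ 0 := by exact_mod_cast hN.ne'
  simp [Measure.smul_apply, Measure.finset_sum_apply, smul_eq_mul,
    ENNReal.inv_mul_cancel hN' (ENNReal.natCast_ne_top N)]

lemma atom_integrable {N : ℕ} (hN : 0 < N) (x : Fin N → ℝ) {f : ℝ → ℝ} :
    Integrable f ((N : ENNReal)⁻¹ • ∑ i, Measure.dirac (x i)) := by
  refine Integrable.smul_measure ?_ (by simp [hN.ne'])
  exact integrable_finset_sum_measure.mpr fun i _ => integrable_dirac' (x i)

lemma map_eval_pi {n : ℕ} (m : Fin n → Measure ℝ) [∀ j, IsProbabilityMeasure (m j)] (j : Fin n) :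
    (Measure.pi m).map (Function.eval j) = m j := by
  ext s hs
  rw [Measure.map_apply (measurable_pi_apply j) hs, Set.eval_preimage, Measure.pi_pi]
  rw [Fintype.prod_eq_single j (fun i hij => by simp [Function.update_of_ne hij])]
  simp

lemma integrable_of_abs_le {n : ℕ} (m : Fin n → Measure ℝ) [∀ j, IsProbabilityMeasure (m j)]
    (hm : ∀ j, Integrable (fun t : ℝ => |t|) (m j))
    {F : (Fin n → ℝ) → ℝ} (hFc : Continuous F) {C : ℝ}
    (hF : ∀ x, |F x| ≤ C + ∑ j, |x j|) : Integrable F (Measure.pi m) := by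
  have hev : ∀ j, Integrable (fun x : Fin n → ℝ => |x j|) (Measure.pi m) := by
    intro j
    have h1 : Integrable (fun t : ℝ => |t|) ((Measure.pi m).map (Function.eval j)) := by
      rw [map_eval_pi m j]; exact hm j
    exact (integrable_map_measure (μ := Measure.pi m) (f := Function.eval j)
      (g := fun t : ℝ => |t|) continuous_abs.aestronglyMeasurable
      (measurable_pi_apply j).aemeasurable).mp h1
  have hbound : Integrable (fun x : Fin n → ℝ => C + ∑ j, |x j|) (Measure.pi m) :=
    (integrable_const C).add (integrable_finset_sum _ fun j _ => hev j)
  exact hbound.mono' hFc.aestronglyMeasurable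
    (Filter.Eventually.of_forall fun x => by simpa [Real.norm_eq_abs] using hF x)

lemma lip_integrable {ρ : Measure ℝ} [IsProbabilityMeasure ρ]
    (hρ : Integrable (fun t : ℝ => |t|) ρ) {ξ : ℝ → ℝ} (hξ : LipschitzWith 1 ξ) :
    Integrable ξ ρ := by
  have hb : ∀ t : ℝ, ‖ξ t‖ ≤ |ξ 0| + |t| := by
    intro t
    have := hξ.dist_le_mul t 0
    rw [Real.dist_eq, Real.dist_eq] at this
    simp only [Real.norm_eq_abs, sub_zero] at this ⊢
    calc |ξ t| ≤ |ξ t - ξ 0| + |ξ 0| := by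
          simpa using abs_add_le (ξ t - ξ 0) (ξ 0)
      _ ≤ |t| + |ξ 0| := add_le_add_left (by simpa using this) _
      _ = |ξ 0| + |t| := add_comm _ _
  exact ((integrable_const (|ξ 0|)).add hρ).mono' hξ.continuous.aestronglyMeasurable
    (Filter.Eventually.of_forall hb)

lemma lip_integral_sub_le {ρ : Measure ℝ} [IsProbabilityMeasure ρ]
    (hρ : Integrable (fun t : ℝ => |t|) ρ) {ξ : ℝ → ℝ} (hξ : LipschitzWith 1 ξ) :
    |∫ t, ξ t ∂ρ - ξ 0| ≤ ∫ t, |t| ∂ρ := by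
  have hint := lip_integrable hρ hξ
  have h0 : ∫ t, ξ t ∂ρ - ξ 0 = ∫ t, (ξ t - ξ 0) ∂ρ := by
    rw [integral_sub hint (integrable_const _), integral_const]
    simp
  rw [h0]
  calc |∫ t, (ξ t - ξ 0) ∂ρ| ≤ ∫ t, |ξ t - ξ 0| ∂ρ := by
        simpa [Real.norm_eq_abs] using norm_integral_le_integral_norm (fun t => ξ t - ξ 0)
    _ ≤ ∫ t, |t| ∂ρ := by
        refine integral_mono (hint.sub (integrable_const _)).abs hρ fun t => ?_
        have := hξ.dist_le_mul t 0
        rw [Real.dist_eq, Real.dist_eq] at this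
        simpa using this

lemma dual_bound {μ ν : Measure ℝ} [IsProbabilityMeasure μ] [IsProbabilityMeasure ν]
    (hμ : Integrable (fun t : ℝ => |t|) μ) (hν : Integrable (fun t : ℝ => |t|) ν)
    {e : ℝ} (h : W1 μ ν ≤ e) {g : ℝ → ℝ} (hg : LipschitzWith 1 g) :
    |∫ t, g t ∂μ - ∫ t, g t ∂ν| ≤ e := by
  have hmem : |∫ t, g t ∂μ - ∫ t, g t ∂ν|
      ∈ { r | ∃ ξ : ℝ → ℝ, LipschitzWith 1 ξ ∧ r = |∫ z, ξ z ∂μ - ∫ z, ξ z ∂ν| } :=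
    ⟨g, hg, rfl⟩
  refine le_trans (le_csSup ?_ hmem) h
  refine ⟨∫ t, |t| ∂μ + ∫ t, |t| ∂ν, ?_⟩
  rintro r ⟨ξ, hξ, rfl⟩
  have h1 := lip_integral_sub_le hμ hξ
  have h2 := lip_integral_sub_le hν hξ
  calc |∫ z, ξ z ∂μ - ∫ z, ξ z ∂ν|
      = |(∫ z, ξ z ∂μ - ξ 0) - (∫ z, ξ z ∂ν - ξ 0)| := by ring_nf
    _ ≤ |∫ z, ξ z ∂μ - ξ 0| + |∫ z, ξ z ∂ν - ξ 0| := abs_sub _ _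
    _ ≤ ∫ t, |t| ∂μ + ∫ t, |t| ∂ν := add_le_add h1 h2

lemma pi_atom {n : ℕ} (Nf : Fin n → ℕ) (hNf : ∀ j, 0 < Nf j)
    (pts : (j : Fin n) → Fin (Nf j) → ℝ) :
    Measure.pi (fun j => (Nf j : ENNReal)⁻¹ • ∑ i, Measure.dirac (pts j i))
      = (∏ j, (Nf j : ENNReal))⁻¹ • ∑ p : (j : Fin n) → Fin (Nf j),
          Measure.dirac (fun j => pts j (p j)) := by
  classical
  haveI : ∀ j, IsProbabilityMeasure ((Nf j : ENNReal)⁻¹ • ∑ i, Measure.dirac (pts j i)) :=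
    fun j => atom_prob (hNf j) (pts j)
  refine Measure.pi_eq fun s hs => ?_
  have hmeas : MeasurableSet (Set.pi Set.univ s) := MeasurableSet.univ_pi hs
  have hrhs : ((∏ j, (Nf j : ENNReal))⁻¹ • ∑ p : (j : Fin n) → Fin (Nf j),
      Measure.dirac (fun j => pts j (p j))) (Set.pi Set.univ s)
      = (∏ j, (Nf j : ENNReal))⁻¹ * ∑ p : (j : Fin n) → Fin (Nf j),
          ∏ j, (if pts j (p j) ∈ s j then (1 : ENNReal) else 0) := by
    rw [Measure.smul_apply, Measure.finset_sum_apply, smul_eq_mul]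
    congr 1
    refine Finset.sum_congr rfl fun p _ => ?_
    rw [Measure.dirac_apply' _ hmeas]
    rw [Set.indicator_apply]
    simp only [Set.mem_univ_pi, Pi.one_apply]
    rw [Finset.prod_boole]
    simp
  rw [hrhs]
  have hswap : ∑ p : (j : Fin n) → Fin (Nf j),
      ∏ j, (if pts j (p j) ∈ s j then (1 : ENNReal) else 0)
      = ∏ j, ∑ i : Fin (Nf j), (if pts j i ∈ s j then (1 : ENNReal) else 0) := by
    rw [Finset.prod_univ_sum]
    rw [← Fintype.piFinset_univ]
  rw [hswap]
  have hinv : (∏ j, (Nf j : ENNReal))⁻¹ = ∏ j, ((Nf j : ENNReal))⁻¹ := by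
    refine ENNReal.prod_inv_distrib ?_
    intro i _ j _ _
    exact Or.inl (by exact_mod_cast (hNf i).ne')
  rw [hinv, ← Finset.prod_mul_distrib]
  refine Finset.prod_congr rfl fun j _ => ?_
  rw [Measure.smul_apply, Measure.finset_sum_apply, smul_eq_mul]
  congr 1
  refine Finset.sum_congr rfl fun i _ => ?_
  rw [Measure.dirac_apply' _ (hs j), Set.indicator_apply]
  simp

lemma step {dd : ℕ} (m m' : Fin dd → Measure ℝ)
    [hpm : ∀ j, IsProbabilityMeasure (m j)] [hpm' : ∀ j, IsProbabilityMeasure (m' j)]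
    (hm : ∀ j, Integrable (fun t : ℝ => |t|) (m j))
    (hm' : ∀ j, Integrable (fun t : ℝ => |t|) (m' j))
    (i : Fin dd) (hsame : ∀ j, j ≠ i → m j = m' j)
    {F : (Fin dd → ℝ) → ℝ} (hFc : Continuous F)
    (hF1 : ∀ x y : Fin dd → ℝ, |F x - F y| ≤ ∑ j, |x j - y j|)
    {e : ℝ}
    (hW : ∀ g : ℝ → ℝ, LipschitzWith 1 g →
      |∫ t, g t ∂(m i) - ∫ t, g t ∂(m' i)| ≤ e) :
    |∫ x, F x ∂(Measure.pi m) - ∫ x, F x ∂(Measure.pi m')| ≤ e := by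
  have hd0 : dd ≠ 0 := fun h => (h ▸ i).elim0
  obtain ⟨n, rfl⟩ : ∃ n, dd = n + 1 := ⟨dd - 1, by omega⟩
  set E := MeasurableEquiv.piFinSuccAbove (fun _ : Fin (n + 1) => ℝ) i with hE
  let ins : ℝ → (Fin n → ℝ) → (Fin (n + 1) → ℝ) := fun a b => i.insertNth a b
  have MP := measurePreserving_piFinSuccAbove m i
  have MP' := measurePreserving_piFinSuccAbove m' i
  set Q := Measure.pi (fun j => m (i.succAbove j)) with hQdef
  haveI : ∀ j, IsProbabilityMeasure (m (i.succAbove j)) := fun j => hpm _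
  haveI : IsProbabilityMeasure Q := by rw [hQdef]; infer_instance
  have hQ' : (Measure.pi fun j => m' (i.succAbove j)) = Q := by
    rw [hQdef]; congr 1; funext j
    exact (hsame _ (Fin.succAbove_ne i j)).symm
  have hC : ∀ x : Fin (n + 1) → ℝ, |F x| ≤ |F 0| + ∑ j, |x j| := by
    intro x
    calc |F x| ≤ |F x - F 0| + |F 0| := by simpa using abs_add_le (F x - F 0) (F 0)
      _ ≤ (∑ j, |x j|) + |F 0| := add_le_add_left (by simpa using hF1 x 0) _
      _ = |F 0| + ∑ j, |x j| := add_comm _ _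
  have IntF : Integrable F (Measure.pi m) := integrable_of_abs_le m hm hFc hC
  have IntF' : Integrable F (Measure.pi m') := integrable_of_abs_le m' hm' hFc hC
  have hEsymm : ∀ (t : ℝ) (y : Fin n → ℝ), E.symm (t, y) = ins t y := by
    intro t y; rfl
  have hprodInt : Integrable (fun z : ℝ × (Fin n → ℝ) => F (E.symm z)) ((m i).prod Q) := by
    have := ((MeasurePreserving.symm E MP).integrable_comp_emb
      E.symm.measurableEmbedding (g := F)).mpr IntF
    exact this
  have hprodInt' : Integrable (fun z : ℝ × (Fin n → ℝ) => F (E.symm z)) ((m' i).prod Q) := by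
    have h2 := ((MeasurePreserving.symm E MP').integrable_comp_emb
      E.symm.measurableEmbedding (g := F)).mpr IntF'
    rwa [hQ'] at h2
  have hI : ∫ x, F x ∂(Measure.pi m) = ∫ t, (∫ y, F (ins t y) ∂Q) ∂(m i) := by
    rw [← (MeasurePreserving.symm E MP).integral_comp E.symm.measurableEmbedding F,
      integral_prod _ hprodInt]
    simp only [hEsymm]
  have hI' : ∫ x, F x ∂(Measure.pi m') = ∫ t, (∫ y, F (ins t y) ∂Q) ∂(m' i) := by
    have := (MeasurePreserving.symm E MP').integral_comp E.symm.measurableEmbedding F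
    rw [hQ'] at this
    rw [← this, integral_prod _ hprodInt']
    simp only [hEsymm]
  have hint_slice : ∀ t : ℝ, Integrable (fun y => F (ins t y)) Q := by
    intro t
    rw [hQdef]
    refine integrable_of_abs_le _ (fun j => hm _)
      (hFc.comp ((continuous_const).finInsertNth i continuous_id))
      (C := |F (ins t (fun _ => (0:ℝ)))|) ?_
    intro y
    have h2 := hF1 (ins t y) (ins t (fun _ => (0:ℝ)))
    have h3 : ∑ k, |ins t y k - ins t (fun _ => (0:ℝ)) k| = ∑ j, |y j| := by
      rw [Fin.sum_univ_succAbove (fun k => |ins t y k - ins t (fun _ => (0:ℝ)) k|) i]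
      simp [ins, Fin.insertNth_apply_same, Fin.insertNth_apply_succAbove]
    calc |F (ins t y)| ≤ |F (ins t y) - F (ins t (fun _ => (0:ℝ)))|
          + |F (ins t (fun _ => (0:ℝ)))| := by
            simpa using abs_add_le (F (ins t y) - F (ins t (fun _ => (0:ℝ)))) (F (ins t (fun _ => (0:ℝ))))
      _ ≤ (∑ j, |y j|) + |F (ins t (fun _ => (0:ℝ)))| := by
            refine add_le_add_left ?_ _
            rw [← h3]; exact h2
      _ = |F (ins t (fun _ => (0:ℝ)))| + ∑ j, |y j| := add_comm _ _
  have hglip : LipschitzWith 1 (fun t => ∫ y, F (ins t y) ∂Q) := by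
    refine LipschitzWith.of_dist_le_mul fun t t' => ?_
    rw [Real.dist_eq, Real.dist_eq, NNReal.coe_one, one_mul]
    rw [← integral_sub (hint_slice t) (hint_slice t')]
    have hptwise : ∀ y : Fin n → ℝ,
        |F (ins t y) - F (ins t' y)| ≤ |t - t'| := by
      intro y
      refine (hF1 _ _).trans ?_
      rw [Fin.sum_univ_succAbove (fun k => |ins t y k - ins t' y k|) i]
      simp [ins, Fin.insertNth_apply_same, Fin.insertNth_apply_succAbove]
    calc |∫ y, (F (ins t y) - F (ins t' y)) ∂Q|
        ≤ ∫ y, |F (ins t y) - F (ins t' y)| ∂Q := by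
          simpa [Real.norm_eq_abs] using
            norm_integral_le_integral_norm (fun y => F (ins t y) - F (ins t' y))
      _ ≤ ∫ _y, |t - t'| ∂Q := by
          exact integral_mono ((hint_slice t).sub (hint_slice t')).abs (integrable_const _)
            hptwise
      _ = |t - t'| := by simp
  rw [hI, hI']
  exact hW _ hglip

lemma euclid_dist_le {d : ℕ} (x y : Fin d → ℝ) :
    dist ((EuclideanSpace.equiv (Fin d) ℝ).symm x) ((EuclideanSpace.equiv (Fin d) ℝ).symm y)
      ≤ ∑ j, |x j - y j| := by
  rw [EuclideanSpace.dist_eq]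
  have h1 : ∀ j : Fin d, dist (x j) (y j) = |x j - y j| := fun j => Real.dist_eq _ _
  calc Real.sqrt (∑ j, dist (x j) (y j) ^ 2)
      ≤ Real.sqrt ((∑ j, |x j - y j|) ^ 2) := by
        refine Real.sqrt_le_sqrt ?_
        simp only [h1]
        exact Finset.sum_sq_le_sq_sum_of_nonneg fun j _ => abs_nonneg _
    _ = ∑ j, |x j - y j| := Real.sqrt_sq (Finset.sum_nonneg fun j _ => abs_nonneg _)

end W1Aux

theorem stmt_10 {d : ℕ}
    (μ : Fin d → Measure ℝ) [∀ j, IsProbabilityMeasure (μ j)]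
    (hmom : ∀ j, Integrable (fun t : ℝ => |t|) (μ j))
    (Nf : Fin d → ℕ) (hNf : ∀ j, 0 < Nf j)
    (pts : (j : Fin d) → Fin (Nf j) → ℝ)
    (ε : Fin d → ℝ) (hε : ∀ j, 0 ≤ ε j)
    (happrox : ∀ j, W1 (μ j) ((Nf j : ENNReal)⁻¹ • ∑ i, Measure.dirac (pts j i)) ≤ ε j) :
    W1 ((Measure.pi μ : Measure (Fin d → ℝ)).map
          (EuclideanSpace.equiv (Fin d) ℝ).symm)
        ((∏ j, (Nf j : ENNReal))⁻¹ • ∑ p : (j : Fin d) → Fin (Nf j),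
          Measure.dirac ((EuclideanSpace.equiv (Fin d) ℝ).symm fun j => pts j (p j))) ≤
      ∑ j, ε j := by
  classical
  have hμprob : ∀ j, IsProbabilityMeasure (μ j) := inferInstance
  set e := EuclideanSpace.equiv (Fin d) ℝ with he
  set ν : Fin d → Measure ℝ := fun j => (Nf j : ENNReal)⁻¹ • ∑ i, Measure.dirac (pts j i)
    with hν
  haveI hνprob : ∀ j, IsProbabilityMeasure (ν j) := fun j => W1Aux.atom_prob (hNf j) (pts j)
  have hmomν : ∀ j, Integrable (fun t : ℝ => |t|) (ν j) := fun j =>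
    W1Aux.atom_integrable (hNf j) (pts j)
  have hsum_nonneg : (0:ℝ) ≤ ∑ j, ε j := Finset.sum_nonneg fun j _ => hε j
  refine Real.sSup_le ?_ hsum_nonneg
  rintro r ⟨ξ, hξ, rfl⟩
  -- the pulled-back function
  set F : (Fin d → ℝ) → ℝ := fun x => ξ (e.symm x) with hF
  have hFc : Continuous F := hξ.continuous.comp e.symm.continuous
  have hF1 : ∀ x y : Fin d → ℝ, |F x - F y| ≤ ∑ j, |x j - y j| := by
    intro x y
    have h1 := hξ.dist_le_mul (e.symm x) (e.symm y)
    rw [NNReal.coe_one, one_mul] at h1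
    rw [hF]
    calc |ξ (e.symm x) - ξ (e.symm y)| = dist (ξ (e.symm x)) (ξ (e.symm y)) :=
          (Real.dist_eq _ _).symm
      _ ≤ dist (e.symm x) (e.symm y) := h1
      _ ≤ ∑ j, |x j - y j| := W1Aux.euclid_dist_le x y
  -- integrals of ξ against the two measures
  have hmap : ∫ z, ξ z ∂((Measure.pi μ).map (e.symm)) = ∫ x, F x ∂(Measure.pi μ) := by
    rw [integral_map e.symm.continuous.measurable.aemeasurable
      hξ.continuous.aestronglyMeasurable]
  have hatomic : ∫ z, ξ z ∂((∏ j, (Nf j : ENNReal))⁻¹ • ∑ p : (j : Fin d) → Fin (Nf j),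
      Measure.dirac (e.symm fun j => pts j (p j))) = ∫ x, F x ∂(Measure.pi ν) := by
    rw [hν, W1Aux.pi_atom Nf hNf pts]
    rw [integral_smul_measure, integral_smul_measure]
    congr 1
    rw [integral_finsetSum_measure (fun p _ => (integrable_const _).congr (ae_eq_dirac _).symm),
      integral_finsetSum_measure (fun p _ => (integrable_const _).congr (ae_eq_dirac _).symm)]
    simp [integral_dirac, hF]
  rw [hmap, hatomic]
  -- telescoping through hybrid measures
  set κ : ℕ → Fin d → Measure ℝ := fun k j => if (j : ℕ) < k then ν j else μ j with hκ
  haveI hκprob : ∀ k j, IsProbabilityMeasure (κ k j) := by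
    intro k j
    show IsProbabilityMeasure (if (j : ℕ) < k then ν j else μ j)
    split_ifs
    · exact hνprob j
    · exact hμprob j
  have hκmom : ∀ k j, Integrable (fun t : ℝ => |t|) (κ k j) := by
    intro k j
    show Integrable (fun t : ℝ => |t|) (if (j : ℕ) < k then ν j else μ j)
    split_ifs
    · exact hmomν j
    · exact hmom j
  set I : ℕ → ℝ := fun k => ∫ x, F x ∂(Measure.pi (κ k)) with hI
  have hκ0 : κ 0 = μ := by funext j; simp [hκ]
  have hκd : κ d = ν := by funext j; simp [hκ, j.isLt]
  have htel : dist (I 0) (I d) ≤ ∑ k ∈ Finset.range d, dist (I k) (I (k + 1)) :=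
    dist_le_range_sum_dist I d
  have hstep : ∀ k ∈ Finset.range d, dist (I k) (I (k + 1))
      ≤ (fun k => if h : k < d then ε ⟨k, h⟩ else 0) k := by
    intro k hk
    rw [Finset.mem_range] at hk
    simp only [dif_pos hk]
    set i : Fin d := ⟨k, hk⟩ with hi
    haveI := hκprob k
    haveI := hκprob (k + 1)
    rw [hI]
    dsimp only
    rw [Real.dist_eq]
    refine W1Aux.step (κ k) (κ (k + 1)) (hκmom k) (hκmom (k + 1)) i ?_ hFc hF1 ?_
    · intro j hj
      have hjk : (j : ℕ) ≠ k := fun h => hj (Fin.ext h)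
      show (if (j : ℕ) < k then ν j else μ j) = (if (j : ℕ) < k + 1 then ν j else μ j)
      by_cases h : (j : ℕ) < k
      · rw [if_pos h, if_pos (by omega)]
      · rw [if_neg h, if_neg (by omega)]
    · intro g hg
      have h1 : κ k i = μ i := by
        show (if (i : ℕ) < k then ν i else μ i) = μ i
        rw [if_neg (by simp [hi])]
      have h2 : κ (k + 1) i = ν i := by
        show (if (i : ℕ) < k + 1 then ν i else μ i) = ν i
        rw [if_pos (by simp [hi])]
      rw [h1, h2]
      haveI := hμprob i
      haveI := hνprob i
      exact W1Aux.dual_bound (hmom i) (hmomν i) (happrox i) hg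
  have hsum : ∑ k ∈ Finset.range d, (fun k => if h : k < d then ε ⟨k, h⟩ else 0) k
      = ∑ j, ε j := by
    rw [← Fin.sum_univ_eq_sum_range (fun k => if h : k < d then ε ⟨k, h⟩ else 0) d]
    refine Finset.sum_congr rfl fun j _ => ?_
    rw [dif_pos j.isLt]
  have hmain : dist (I 0) (I d) ≤ ∑ j, ε j := by
    refine htel.trans ?_
    rw [← hsum]
    exact Finset.sum_le_sum hstep
  have h0 : I 0 = ∫ x, F x ∂(Measure.pi μ) := by rw [hI]; dsimp only; rw [hκ0]
  have hd : I d = ∫ x, F x ∂(Measure.pi ν) := by rw [hI]; dsimp only; rw [hκd]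
  rw [← h0, ← hd, ← Real.dist_eq]
  exact hmain

end
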